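/- Let n ≥ 1 and let X be any n×n complex matrix. Then |det X|² ≤ (Tr(X† X).re / n)^n, and equality holds if and only if there exists a nonnegative real c such that X† X = c • 1. -/

import Mathlib

open Matrix

noncomputable section

lemma amgm_eq (n : ℕ) (hn : 1 ≤ n) (f : Fin n → ℝ) (hf : ∀ i, 0 ≤ f i) :
    (∏ i, f i ≤ ((∑ i, f i) / n) ^ n) ∧
    (∏ i, f i = ((∑ i, f i) / n) ^ n ↔ ∀ i, f i = (∑ i, f i) / n) := by
  have hn0 : (n : ℝ) ≠ 0 := by
    exact_mod_cast Nat.one_le_iff_ne_zero.mp hn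
  have hnpos : (0:ℝ) < n := by positivity
  set m := (∑ i, f i) / n with hm
  have hsum0 : 0 ≤ ∑ i, f i := Finset.sum_nonneg fun i _ => hf i
  have hm0 : 0 ≤ m := div_nonneg hsum0 hnpos.le
  by_cases hpos : ∀ i, 0 < f i
  · have hmpos : 0 < m := by
      have : 0 < ∑ i, f i :=
        Finset.sum_pos (fun i _ => hpos i) ⟨⟨0, hn⟩, Finset.mem_univ _⟩
      exact div_pos this hnpos
    have hw : ∑ _i : Fin n, (1 / (n:ℝ)) = 1 := by
      simp [Finset.sum_const]
      exact mul_inv_cancel₀ hn0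
    have hsmul : ∑ i, (1 / (n:ℝ)) • f i = m := by
      simp only [smul_eq_mul, ← Finset.mul_sum, hm]
      field_simp
    have hprodpos : 0 < ∏ i, f i := Finset.prod_pos (fun i _ => hpos i)
    have hlog : ∑ i, (1 / (n:ℝ)) • Real.log (f i) = Real.log (∏ i, f i) / n := by
      rw [Real.log_prod (fun i _ => (hpos i).ne')]
      simp only [smul_eq_mul, ← Finset.mul_sum]
      ring
    have jle := (strictConcaveOn_log_Ioi.concaveOn).le_map_sum
      (t := Finset.univ) (w := fun _ : Fin n => 1 / (n:ℝ)) (p := f)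
      (fun i _ => by positivity) hw (fun i _ => hpos i)
    rw [hsmul, hlog] at jle
    have jiff := strictConcaveOn_log_Ioi.map_sum_eq_iff
      (t := Finset.univ) (w := fun _ : Fin n => 1 / (n:ℝ)) (p := f)
      (fun i _ => by positivity) hw (fun i _ => hpos i)
    rw [hsmul, hlog] at jiff
    have hiff2 : ∏ i, f i = m ^ n ↔ Real.log (∏ i, f i) = Real.log (m ^ n) := by
      constructor
      · intro h; rw [h]
      · intro h
        exact Real.log_injOn_pos (Set.mem_Ioi.mpr hprodpos)
          (Set.mem_Ioi.mpr (pow_pos hmpos n)) h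
    have hiff3 : Real.log (∏ i, f i) = Real.log (m ^ n) ↔
        Real.log m = Real.log (∏ i, f i) / n := by
      rw [Real.log_pow]
      constructor
      · intro h; field_simp [h]; rw [h]; ring
      · intro h; rw [h]; field_simp
    constructor
    · -- inequality
      have : Real.log (∏ i, f i) ≤ Real.log (m ^ n) := by
        rw [Real.log_pow]
        calc Real.log (∏ i, f i) = n * (Real.log (∏ i, f i) / n) := by field_simp
        _ ≤ n * Real.log m := by
            exact mul_le_mul_of_nonneg_left jle hnpos.le
      exact (Real.log_le_log_iff hprodpos (pow_pos hmpos n)).mp this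
    · rw [hiff2, hiff3, jiff]
      simp
  · push_neg at hpos
    obtain ⟨i0, hi0⟩ := hpos
    have hfi0 : f i0 = 0 := le_antisymm hi0 (hf i0)
    have hprod : ∏ i, f i = 0 := Finset.prod_eq_zero (Finset.mem_univ i0) hfi0
    refine ⟨by rw [hprod]; positivity, ?_⟩
    rw [hprod]
    constructor
    · intro h
      have hmz : m = 0 :=
        pow_eq_zero_iff (Nat.one_le_iff_ne_zero.mp hn) |>.mp h.symm
      have hsz : ∑ j, f j = 0 := by
        rw [hm, div_eq_zero_iff] at hmz
        tauto
      intro i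
      have := (Finset.sum_eq_zero_iff_of_nonneg (fun j _ => hf j)).mp hsz i
        (Finset.mem_univ i)
      rw [this, hmz]
    · intro h
      have hmz : m = 0 := by rw [← h i0, hfi0]
      rw [hmz, zero_pow (Nat.one_le_iff_ne_zero.mp hn)]

theorem abs_det_sq_le_trace_div_pow
    (n : ℕ) (hn : 1 ≤ n) (X : Matrix (Fin n) (Fin n) ℂ) :
    ‖X.det‖ ^ 2 ≤ ((Xᴴ * X).trace.re / n) ^ n ∧
    (‖X.det‖ ^ 2 = ((Xᴴ * X).trace.re / n) ^ n ↔
      ∃ c : ℝ, 0 ≤ c ∧ Xᴴ * X = (c : ℂ) • 1) := by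
  have hA : (Xᴴ * X).IsHermitian := isHermitian_conjTranspose_mul_self X
  set ev := hA.eigenvalues with hev
  have hnn : ∀ i, 0 ≤ ev i := fun i => eigenvalues_conjTranspose_mul_self_nonneg X i
  have hU : (hA.eigenvectorUnitary : Matrix (Fin n) (Fin n) ℂ) *
      star (hA.eigenvectorUnitary : Matrix (Fin n) (Fin n) ℂ) = 1 :=
    Matrix.mem_unitaryGroup_iff.mp hA.eigenvectorUnitary.2
  have hU' : star (hA.eigenvectorUnitary : Matrix (Fin n) (Fin n) ℂ) *
      (hA.eigenvectorUnitary : Matrix (Fin n) (Fin n) ℂ) = 1 :=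
    Matrix.mem_unitaryGroup_iff'.mp hA.eigenvectorUnitary.2
  have htrC : (Xᴴ * X).trace = ((∑ i, ev i : ℝ) : ℂ) := by
    conv_lhs => rw [hA.spectral_theorem, Unitary.conjStarAlgAut_apply]
    rw [Matrix.trace_mul_cycle, hU', one_mul, Matrix.trace_diagonal]
    push_cast
    rfl
  have htr : (Xᴴ * X).trace.re = ∑ i, ev i := by rw [htrC, Complex.ofReal_re]
  have hdetC : (Xᴴ * X).det = ((∏ i, ev i : ℝ) : ℂ) := by
    rw [hA.det_eq_prod_eigenvalues]
    push_cast
    rfl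
  have hdet : ‖X.det‖ ^ 2 = ∏ i, ev i := by
    have h2 : (Xᴴ * X).det = ((‖X.det‖ ^ 2 : ℝ) : ℂ) := by
      rw [Matrix.det_mul, Matrix.det_conjTranspose, Complex.sq_norm,
        Complex.normSq_eq_conj_mul_self]
      rfl
    have := hdetC.symm.trans h2
    exact_mod_cast this.symm
  obtain ⟨hle, hiff⟩ := amgm_eq n hn ev hnn
  rw [hdet, htr]
  refine ⟨hle, ?_⟩
  constructor
  · intro heq
    have h := hiff.mp heq
    refine ⟨(∑ i, ev i) / n, div_nonneg (Finset.sum_nonneg fun i _ => hnn i)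
      (by positivity), ?_⟩
    have hdiag : Matrix.diagonal (RCLike.ofReal ∘ ev) =
        (((∑ i, ev i) / n : ℝ) : ℂ) • (1 : Matrix (Fin n) (Fin n) ℂ) := by
      ext i j
      by_cases hij : i = j
      · subst hij
        simp [Matrix.diagonal, Matrix.one_apply, h i]
      · simp [Matrix.diagonal, Matrix.one_apply, hij]
    conv_lhs => rw [hA.spectral_theorem, Unitary.conjStarAlgAut_apply]
    rw [hdiag, Matrix.mul_smul, Matrix.mul_one, Matrix.smul_mul, hU]
  · rintro ⟨c, hc, hXc⟩
    have hn0 : (n : ℝ) ≠ 0 := by exact_mod_cast Nat.one_le_iff_ne_zero.mp hn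
    have htr2 : (∑ i, ev i) = c * n := by
      have : (Xᴴ * X).trace = ((c * n : ℝ) : ℂ) := by
        rw [hXc, Matrix.trace_smul, Matrix.trace_one]
        push_cast
        simp [mul_comm]
      have := htrC.symm.trans this
      exact_mod_cast this
    have hdet2 : (∏ i, ev i) = c ^ n := by
      have : (Xᴴ * X).det = ((c ^ n : ℝ) : ℂ) := by
        rw [hXc, Matrix.det_smul, Matrix.det_one]
        push_cast
        simp
      have := hdetC.symm.trans this
      exact_mod_cast this
    rw [hdet2, htr2, mul_div_cancel_right₀ c hn0]
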